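/- arXiv:1705.03489 — 5 statements merged into one kernel-verified Lean document; each statement's English description precedes it below -/
import Mathlib

section
/- Let M be a uniform R-module. Then M is completely prime if and only if every cyclic submodule Rm of M is a completely prime module. -/
theorem uniform_completely_prime_iff_cyclic
    {R M : Type*} [Ring R] [AddCommGroup M] [Module R M]
    (hRM : ∃ (r : R) (m : M), r • m ≠ 0)
    (huniform : ∀ N N' : Submodule R M, N ≠ ⊥ → N' ≠ ⊥ → N ⊓ N' ≠ ⊥) :
    (∀ (a : R) (m : M), a • m = 0 → m = 0 ∨ ∀ x : M, a • x = 0) ↔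
      (∀ m : M, ∀ (a : R) (x : Submodule.span R {m}),
        a • x = 0 → x = 0 ∨ ∀ y : Submodule.span R {m}, a • y = 0) := by
  constructor
  · intro h m a x hax
    have hax' : a • (x : M) = 0 := congrArg Subtype.val hax
    rcases h a x hax' with h0 | hall
    · left; exact Subtype.ext h0
    · right; intro y; exact Subtype.ext (hall y)
  · intro h a m ham
    by_cases hm : m = 0
    · left; exact hm
    right
    intro x
    by_cases hx : x = 0
    · simp [hx]
    -- a kills span{m}
    have hmem : m ∈ Submodule.span R {m} := Submodule.mem_span_singleton_self m
    have hkill_m : ∀ y : Submodule.span R {m}, a • y = 0 := by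
      rcases h m a ⟨m, hmem⟩ (Subtype.ext ham) with h0 | hall
      · exact absurd (congrArg Subtype.val h0) hm
      · exact hall
    -- intersection nonzero
    have hNm : Submodule.span R {m} ≠ ⊥ := by
      intro hbot
      exact hm ((Submodule.mem_bot R).mp (hbot ▸ hmem))
    have hxmem : x ∈ Submodule.span R {x} := Submodule.mem_span_singleton_self x
    have hNx : Submodule.span R {x} ≠ ⊥ := by
      intro hbot
      exact hx ((Submodule.mem_bot R).mp (hbot ▸ hxmem))
    obtain ⟨w, hw, hwne⟩ := Submodule.ne_bot_iff _ |>.mp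
      (huniform _ _ hNm hNx)
    have hwm : w ∈ Submodule.span R {m} := hw.1
    have hwx : w ∈ Submodule.span R {x} := hw.2
    have haw : a • w = 0 := congrArg Subtype.val (hkill_m ⟨w, hwm⟩)
    rcases h x a ⟨w, hwx⟩ (Subtype.ext haw) with h0 | hall
    · exact absurd (congrArg Subtype.val h0) hwne
    · exact congrArg Subtype.val (hall ⟨x, hxmem⟩)
end

section
/- Let M be a torsionless R-module (for every nonzero m ∈ M there exists f ∈ Hom_R(M, R) with f(m) ≠ 0) with RM ≠ 0. If R is a domain, then M is a completely prime module. -/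
theorem torsionless_over_domain_completely_prime
    {R M : Type*} [Ring R] [IsDomain R] [AddCommGroup M] [Module R M]
    (hRM : ∃ (r : R) (m : M), r • m ≠ 0)
    (htl : ∀ m : M, m ≠ 0 → ∃ f : M →ₗ[R] R, f m ≠ 0) :
    ∀ (a : R) (m : M), a • m = 0 → m = 0 ∨ ∀ x : M, a • x = 0 := by
  intro a m ham
  by_cases hm : m = 0
  · exact Or.inl hm
  · right
    obtain ⟨f, hf⟩ := htl m hm
    have : a * f m = 0 := by
      rw [← smul_eq_mul, ← f.map_smul, ham, f.map_zero]
    have ha : a = 0 := by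
      rcases mul_eq_zero.mp this with h | h
      · exact h
      · exact absurd h hf
    intro x
    rw [ha, zero_smul]
end

section
/- An R-module M with RM ≠ 0 is completely co-prime if and only if every proper submodule of M is a completely prime submodule (i.e., M is fully completely prime). -/
theorem completely_coprime_iff_fully_completely_prime
    {R M : Type*} [Ring R] [AddCommGroup M] [Module R M]
    (hRM : ∃ (r : R) (m : M), r • m ≠ 0) :
    (∀ (N : Submodule R M) (m : M), m ∉ N →
        {r : R | r • m ∈ N} = {r : R | ∀ x : M, r • x = 0}) ↔
      (∀ N : Submodule R M, N ≠ ⊤ →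
        ∀ (a : R) (m : M), a • m ∈ N → m ∈ N ∨ ∀ x : M, a • x ∈ N) := by
  constructor
  · intro h N hN a m ham
    by_cases hm : m ∈ N
    · exact Or.inl hm
    · right
      intro x
      have hset := h N m hm
      have ha : a ∈ {r : R | r • m ∈ N} := ham
      rw [hset] at ha
      rw [ha x]
      exact N.zero_mem
  · intro h N m hm
    ext r
    simp only [Set.mem_setOf_eq]
    constructor
    · intro hrm
      have hN : N ≠ ⊤ := fun e => hm (e ▸ Submodule.mem_top)
      rcases h N hN r m hrm with h1 | h2
      · exact absurd h1 hm
      intro x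
      by_contra hx0
      -- ⊥ is proper since r • x ≠ 0
      have hbot : (⊥ : Submodule R M) ≠ ⊤ := by
        intro e
        apply hx0
        have : r • x ∈ (⊥ : Submodule R M) := by rw [e]; trivial
        simpa using this
      -- r acts injectively (primeness of ⊥)
      have hinj : ∀ z : M, r • z = 0 → z = 0 := by
        intro z hz
        rcases h ⊥ hbot r z (by simpa using hz) with h1 | h2'
        · simpa using h1
        · exact absurd (by simpa using h2' x) hx0
      set y2 := r • x with hy2def
      have hy2ne : y2 ≠ 0 := hx0
      by_cases hmem : y2 ∈ Submodule.span R {r • y2}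
      · rcases Submodule.mem_span_singleton.mp hmem with ⟨s, hs⟩
        have h0 : (1 - s * r) • y2 = 0 := by
          rw [sub_smul, one_smul, mul_smul, hs, sub_self]
        rcases h ⊥ hbot (1 - s * r) y2 (by simpa using h0) with h1 | h2' 
        · exact hy2ne (by simpa using h1)
        · -- (1 - s*r) annihilates M, so every w = s • (r • w) ∈ N, i.e. N = ⊤
          apply hm
          have hw : ∀ w : M, w ∈ N := by
            intro w
            have hw0 : (1 - s * r) • w = 0 := by simpa using h2' w
            have : w = s • (r • w) := by
              have := sub_eq_zero.mp (by
                rw [sub_smul, one_smul, mul_smul] at hw0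
                exact hw0)
              simpa using this
            rw [this]
            exact N.smul_mem s (h2 w)
          exact hw m
      · have hP : Submodule.span R {r • y2} ≠ ⊤ :=
          fun e => hmem (e ▸ Submodule.mem_top)
        rcases h _ hP r y2 (Submodule.mem_span_singleton_self _) with h1 | h2'
        · exact hmem h1
        · exact hmem (h2' x)
    · intro hr
      rw [hr m]
      exact N.zero_mem
end

section
/- If M is a fully prime module over a left-duo ring R, then M is fully completely prime. -/
theorem fully_prime_left_duo_fully_completely_prime
    {R M : Type*} [Ring R] [AddCommGroup M] [Module R M]
    (hRM : ∃ (r : R) (m : M), r • m ≠ 0)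
    (hduo : ∀ (I : Submodule R R), ∀ x ∈ I, ∀ r : R, x * r ∈ I)
    (hfp : ∀ P : Submodule R M, P ≠ ⊤ →
      ∀ (a : R) (m : M), (∀ r : R, (a * r) • m ∈ P) → m ∈ P ∨ ∀ x : M, a • x ∈ P) :
    ∀ P : Submodule R M, P ≠ ⊤ →
      ∀ (a : R) (m : M), a • m ∈ P → m ∈ P ∨ ∀ x : M, a • x ∈ P := by
  intro P hP a m ham
  apply hfp P hP a m
  intro r
  have h : a * r ∈ Submodule.span R {a} :=
    hduo _ a (Submodule.mem_span_singleton_self a) r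
  obtain ⟨s, hs⟩ := Submodule.mem_span_singleton.mp h
  have : (a * r) • m = s • (a • m) := by
    rw [← hs, smul_eq_mul, mul_smul]
  rw [this]
  exact P.smul_mem s ham
end

section
/- Over a class of IFP modules, faithful completely prime modules are closed under essential extensions: if N is an essential submodule of an IFP module M and N is a faithful completely prime module, then M is a faithful completely prime module. -/
theorem faithful_completely_prime_essential_extension
    {R M : Type*} [Ring R] [AddCommGroup M] [Module R M]
    (hIFP : ∀ (a : R) (m : M), a • m = 0 → ∀ r : R, a • (r • m) = 0)
    (N : Submodule R M)
    (hess : ∀ K : Submodule R M, K ≠ ⊥ → N ⊓ K ≠ ⊥)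
    (hRN : ∃ r : R, ∃ n ∈ N, r • n ≠ 0)
    (hNfaith : ∀ r : R, (∀ n ∈ N, r • n = 0) → r = 0)
    (hNcp : ∀ a : R, ∀ n ∈ N, a • n = 0 → n = 0 ∨ ∀ n' ∈ N, a • n' = 0) :
    (∀ r : R, (∀ x : M, r • x = 0) → r = 0) ∧
      (∀ (a : R) (m : M), a • m = 0 → m = 0 ∨ ∀ x : M, a • x = 0) := by
  constructor
  · intro r h
    exact hNfaith r fun n _ => h n
  · intro a m ham
    by_cases hm : m = 0
    · exact Or.inl hm
    right
    -- span of m is nonzero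
    have hK : Submodule.span R ({m} : Set M) ≠ (⊥ : Submodule R M) := by
      intro h
      exact hm (by simpa [h] using Submodule.mem_span_singleton_self (R := R) m)
    have hNK := hess _ hK
    rw [Submodule.ne_bot_iff] at hNK
    obtain ⟨n, hn, hn0⟩ := hNK
    obtain ⟨hnN, hnK⟩ := hn
    obtain ⟨r, hr⟩ := Submodule.mem_span_singleton.mp hnK
    have han : a • n = 0 := by rw [← hr]; exact hIFP a m ham r
    rcases hNcp a n hnN han with h0 | hall
    · exact absurd h0 hn0
    · have ha : a = 0 := hNfaith a hall
      intro x; simp [ha]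
end
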